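/- Let p > 3 be a prime. Then the Catalan number C_{p-1} = (1/p)·C(2p-2, p-1) satisfies C_{p-1} ≡ -1 (mod p), and C_k ≡ 0 (mod p) for all k with (p-1)/2 < k < p-1. -/

import Mathlib

lemma catalan_sub_eq (n : ℕ) : catalan n = (2*n).choose n - (2*n).choose (n+1) := by
  have h1 := succ_mul_catalan_eq_centralBinom n
  rw [Nat.centralBinom] at h1
  have h2 : (2*n).choose (n+1) * (n+1) = (2*n).choose n * n := by
    have := Nat.choose_succ_right_eq (2*n) n
    simpa [two_mul] using this
  have hle : (2*n).choose (n+1) ≤ (2*n).choose n := by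
    have := Nat.choose_le_middle (n+1) (2*n)
    simpa [Nat.mul_div_cancel_left n (by norm_num : 0 < 2)] using this
  obtain ⟨d, hd⟩ := Nat.exists_eq_add_of_le hle
  rw [hd] at h1 h2 ⊢
  have hb : (2*n).choose (n+1) = d * n := by nlinarith
  have : (n+1) * catalan n = (n+1) * d := by rw [h1, hb]; ring
  simpa using Nat.eq_of_mul_eq_mul_left (Nat.succ_pos n) this

theorem stmt11 (p : ℕ) (hp : p.Prime) (hp3 : 3 < p) :
    (catalan (p - 1) : ZMod p) = -1 ∧
      ∀ k : ℕ, (p - 1) / 2 < k → k < p - 1 → (catalan k : ZMod p) = 0 := by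
  haveI := Fact.mk hp
  have hodd : p % 2 = 1 := Nat.odd_iff.mp (hp.odd_of_ne_two (by omega))
  constructor
  · -- catalan (p-1) ≡ -1
    have hcat := catalan_sub_eq (p - 1)
    have hs : p - 1 + 1 = p := by omega
    rw [hs] at hcat
    have hle : (2*(p-1)).choose p ≤ (2*(p-1)).choose (p-1) := by
      have := Nat.choose_le_middle p (2*(p-1))
      simpa [Nat.mul_div_cancel_left (p-1) (by norm_num : 0 < 2)] using this
    -- Lucas for the two binomials
    have l1 := Choose.choose_modEq_choose_mod_mul_choose_div_nat (p := p) (n := 2*(p-1)) (k := p-1)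
    have l2 := Choose.choose_modEq_choose_mod_mul_choose_div_nat (p := p) (n := 2*(p-1)) (k := p)
    have e1 : 2*(p-1) % p = p - 2 := by
      rw [Nat.mod_eq_sub_mod (by omega), Nat.mod_eq_of_lt (by omega)]; omega
    have e2 : 2*(p-1) / p = 1 := by
      rw [Nat.div_eq_sub_div hp.pos (by omega), Nat.div_eq_of_lt (by omega)]
    have e3 : (p-1) % p = p - 1 := Nat.mod_eq_of_lt (by omega)
    have e4 : (p-1) / p = 0 := Nat.div_eq_of_lt (by omega)
    rw [e1, e2, e3, e4, Nat.choose_eq_zero_of_lt (by omega : p - 2 < p - 1)] at l1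
    rw [e1, e2, Nat.mod_self, Nat.div_self hp.pos] at l2
    simp at l1 l2
    have c1 : ((2*(p-1)).choose (p-1) : ZMod p) = 0 := by
      have := (ZMod.natCast_eq_natCast_iff _ _ _).mpr l1
      simpa using this
    have c2 : ((2*(p-1)).choose p : ZMod p) = 1 := by
      have := (ZMod.natCast_eq_natCast_iff _ _ _).mpr l2
      simpa using this
    rw [hcat]
    rw [Nat.cast_sub hle, c1, c2]
    ring
  · intro k hk1 hk2
    have hkp : 2 * k ≥ p + 1 := by omega
    have hkp2 : 2 * k < 2 * p := by omega
    have h1 := succ_mul_catalan_eq_centralBinom k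
    rw [Nat.centralBinom] at h1
    have l := Choose.choose_modEq_choose_mod_mul_choose_div_nat (p := p) (n := 2*k) (k := k)
    have e1 : 2*k % p = 2*k - p :=
      (Nat.mod_eq_sub_mod (by omega)).trans (Nat.mod_eq_of_lt (by omega))
    have e2 : 2*k / p = 1 := by
      rw [Nat.div_eq_sub_div hp.pos (by omega), Nat.div_eq_of_lt (by omega)]
    have e3 : k % p = k := Nat.mod_eq_of_lt (by omega)
    have e4 : k / p = 0 := Nat.div_eq_of_lt (by omega)
    rw [e1, e2, e3, e4, Nat.choose_eq_zero_of_lt (by omega : 2*k - p < k)] at l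
    simp at l
    have c : ((2*k).choose k : ZMod p) = 0 := by
      have := (ZMod.natCast_eq_natCast_iff _ _ _).mpr l
      simpa using this
    have hcast : ((k+1 : ℕ) : ZMod p) * (catalan k : ZMod p) = 0 := by
      rw [← Nat.cast_mul, h1, c]
    have hne : ((k+1 : ℕ) : ZMod p) ≠ 0 := by
      rw [Ne, ZMod.natCast_eq_zero_iff]
      intro hdvd
      have := Nat.le_of_dvd (by omega) hdvd
      omega
    exact (mul_eq_zero.mp hcast).resolve_left hne
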